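/- Let L be a quasi-unimodular lattice (a finitely generated free abelian group with an alternating ℤ-bilinear form) and let w_1, w_2, w_3, w_4 ∈ L be primitive elements whose images under the adjoint map L → Hom(L,ℤ) are ℚ-linearly independent. Then the natural map ⨁_{i=1}^{4} Λ³(w_i^⊥ ⊗ ℚ) → Λ³(L ⊗ ℚ) is surjective. -/

import Mathlib

open TensorProduct

/-- An element of a (free abelian) lattice is primitive if it is not a multiple `m • w`
with `m ≥ 2` and `w ≠ 0`. -/
def IsPrimitive {L : Type*} [AddCommGroup L] (v : L) : Prop :=
  ¬ ∃ (m : ℤ) (w : L), 2 ≤ m ∧ w ≠ 0 ∧ v = m • w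

/-- Every element of `ℚ ⊗[ℤ] L` can be cleared of denominators. -/
lemma exists_denominator {L : Type*} [AddCommGroup L] [Module ℤ L] (x : ℚ ⊗[ℤ] L) :
    ∃ (n : ℤ) (y : L), 0 < n ∧ (n : ℚ) • x = (1 : ℚ) ⊗ₜ[ℤ] y := by
  have : CompatibleSMul ℤ ℤ ℚ L := by
    obtain rfl : ‹Module ℤ L› = AddCommGroup.toIntModule L := Subsingleton.elim _ _
    infer_instance
  induction x using TensorProduct.induction_on with
  | zero => exact ⟨1, 0, one_pos, by simp⟩
  | tmul q m =>
    have h1 : (((q.den : ℤ)) : ℚ) * q = (q.num : ℚ) := by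
      push_cast
      rw [mul_comm]
      exact_mod_cast Rat.mul_den_eq_num q
    have key : ((q.den : ℤ) : ℚ) • (q ⊗ₜ[ℤ] m) = (1 : ℚ) ⊗ₜ[ℤ] (q.num • m) := by
      rw [smul_tmul', smul_eq_mul, h1, show ((q.num : ℚ)) = q.num • (1 : ℚ) by simp, smul_tmul]
      congr 1
      simpa using Int.cast_smul_eq_zsmul ℤ q.num m
    exact ⟨q.den, q.num • m, by exact_mod_cast q.den_pos, key⟩
  | add x y hx hy =>
    obtain ⟨n, a, hn, ha⟩ := hx
    obtain ⟨m, b, hm, hb⟩ := hy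
    refine ⟨n * m, m • a + n • b, mul_pos hn hm, ?_⟩
    have h1 : ((n * m : ℤ) : ℚ) • x = (m : ℤ) • ((n : ℚ) • x) := by
      rw [← Int.cast_smul_eq_zsmul ℚ m, smul_smul]
      push_cast
      ring_nf
    have h2 : ((n * m : ℤ) : ℚ) • y = (n : ℤ) • ((m : ℚ) • y) := by
      rw [← Int.cast_smul_eq_zsmul ℚ n, smul_smul]
      push_cast
      ring_nf
    rw [smul_add, h1, h2, ha, hb, ← tmul_smul, ← tmul_smul, ← tmul_add]
    congr 1
    congr 1
    · simpa using Int.cast_smul_eq_zsmul ℤ m a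
    · simpa using Int.cast_smul_eq_zsmul ℤ n b

set_option maxHeartbeats 1000000 in
set_option synthInstance.maxHeartbeats 400000 in
/-- Let `L` be a quasi-unimodular lattice and `w₁, …, w₄ ∈ L` primitive
elements whose adjoints are `ℚ`-linearly independent.  Then the natural map
`⨁ᵢ Λ³(wᵢ^⊥ ⊗ ℚ) → Λ³(L ⊗ ℚ)` is surjective, i.e. the images of the `Λ³(wᵢ^⊥ ⊗ ℚ)`
span `Λ³(L ⊗ ℚ)`. -/
theorem stmt_3 (L : Type*) [AddCommGroup L] [Module ℤ L] [Module.Free ℤ L]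
    [Module.Finite ℤ L]
    (B : L →ₗ[ℤ] L →ₗ[ℤ] ℤ) (hB : ∀ x, B x x = 0)
    (w : Fin 4 → L) (hw : ∀ i, IsPrimitive (w i))
    (hind : LinearIndependent ℚ (fun i => (Algebra.linearMap ℤ ℚ) ∘ₗ B (w i))) :
    ⨆ i : Fin 4,
        Submodule.map
          (ExteriorAlgebra.map ((LinearMap.ker (B (w i))).baseChange ℚ).subtype).toLinearMap
          (⋀[ℚ]^3 ↥((LinearMap.ker (B (w i))).baseChange ℚ)) = ⋀[ℚ]^3 (ℚ ⊗[ℤ] L) := by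
  classical
  set ψ : Fin 4 → ((ℚ ⊗[ℤ] L) →ₗ[ℚ] ℚ) :=
    fun i => LinearMap.liftBaseChange ℚ ((Algebra.linearMap ℤ ℚ) ∘ₗ B (w i)) with hψdef
  -- Step 1: elements of `ker (ψ i)` come from the base change of `ker (B (w i))`.
  have hker : ∀ (i : Fin 4) (x : ℚ ⊗[ℤ] L), ψ i x = 0 →
      x ∈ (LinearMap.ker (B (w i))).baseChange ℚ := by
    intro i x hx
    obtain ⟨n, y, hn, hny⟩ := exists_denominator x
    have hy : B (w i) y = 0 := by
      have h0 : ψ i ((n : ℚ) • x) = 0 := by rw [map_smul, hx, smul_zero]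
      rw [hny] at h0
      have h1 : ((B (w i) y : ℤ) : ℚ) = 0 := by
        simpa [hψdef, LinearMap.liftBaseChange_tmul] using h0
      exact_mod_cast h1
    have h1 : (1 : ℚ) ⊗ₜ[ℤ] y ∈ (LinearMap.ker (B (w i))).baseChange ℚ :=
      Submodule.tmul_mem_baseChange_of_mem 1 hy
    have hne : (n : ℚ) ≠ 0 := Int.cast_ne_zero.mpr hn.ne'
    have hx' : x = (n : ℚ)⁻¹ • ((1 : ℚ) ⊗ₜ[ℤ] y) := by
      rw [← hny, smul_smul, inv_mul_cancel₀ hne, one_smul]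
    rw [hx']
    exact Submodule.smul_mem _ _ h1
  -- Step 2: the extended functionals are linearly independent.
  have hψind : LinearIndependent ℚ ψ := by
    let Φ : ((ℚ ⊗[ℤ] L) →ₗ[ℚ] ℚ) →ₗ[ℚ] (L →ₗ[ℤ] ℚ) :=
      { toFun := fun f => f.restrictScalars ℤ ∘ₗ ((TensorProduct.mk ℤ ℚ L) 1)
        map_add' := fun f g => rfl
        map_smul' := fun q f => rfl }
    have hcomp : (fun i => (Algebra.linearMap ℤ ℚ) ∘ₗ B (w i)) = Φ ∘ ψ := by
      funext i
      ext x
      simp [Φ, hψdef]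
      change _ = (LinearMap.liftBaseChange ℚ (Algebra.linearMap ℤ ℚ ∘ₗ B (w i))) ((1:ℚ) ⊗ₜ[ℤ] x)
      rw [LinearMap.liftBaseChange_tmul]
      simp
    rw [hcomp] at hind
    exact LinearIndependent.of_comp Φ hind
  -- Step 3: a "dual family" to the functionals.
  have hu : ∀ j : Fin 4, ∃ u : ℚ ⊗[ℤ] L, ∀ i, ψ i u = if i = j then 1 else 0 := by
    intro j
    have hnot : ¬ (⨅ i : {i : Fin 4 // i ≠ j}, LinearMap.ker (ψ i)) ≤ LinearMap.ker (ψ j) := by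
      intro hle
      have hmem := mem_span_of_iInf_ker_le_ker (L := fun i : {i : Fin 4 // i ≠ j} => ψ i) hle
      have hrange : Set.range (fun i : {i : Fin 4 // i ≠ j} => ψ (i : Fin 4)) = ψ '' {j}ᶜ := by
        rw [show (fun i : {i : Fin 4 // i ≠ j} => ψ (i : Fin 4)) = ψ ∘ Subtype.val from rfl,
          Set.range_comp, Subtype.range_coe_subtype,
          show {x : Fin 4 | x ≠ j} = ({j}ᶜ : Set (Fin 4)) from by ext x; simp]
      rw [hrange] at hmem
      exact hψind.notMem_span_image (by simp) hmem
    obtain ⟨v, hv, hvj⟩ := SetLike.not_le_iff_exists.mp hnot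
    refine ⟨(ψ j v)⁻¹ • v, fun i => ?_⟩
    by_cases hij : i = j
    · subst hij
      rw [map_smul, smul_eq_mul, inv_mul_cancel₀ (by simpa using hvj), if_pos rfl]
    · rw [if_neg hij, map_smul, smul_eq_mul]
      have : ψ i v = 0 := by
        have := Submodule.mem_iInf (fun i : {i : Fin 4 // i ≠ j} => LinearMap.ker (ψ i)) |>.mp
          hv ⟨i, hij⟩
        simpa using this
      rw [this, mul_zero]
  choose u hu using hu
  -- Main argument.
  apply le_antisymm
  · -- each `Λ³(wᵢ^⊥ ⊗ ℚ)` maps into `Λ³(L ⊗ ℚ)`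
    apply iSup_le
    intro i
    rw [← ExteriorAlgebra.ιMulti_span_fixedDegree ℚ 3
        (M := ↥((LinearMap.ker (B (w i))).baseChange ℚ)), Submodule.map_span, Submodule.span_le]
    rintro - ⟨-, ⟨v, rfl⟩, rfl⟩
    rw [AlgHom.toLinearMap_apply, ExteriorAlgebra.map_apply_ιMulti]
    exact ExteriorAlgebra.ιMulti_range ℚ 3 ⟨_, rfl⟩
  · -- surjectivity
    rw [← ExteriorAlgebra.ιMulti_span_fixedDegree ℚ 3 (M := ℚ ⊗[ℤ] L), Submodule.span_le]
    rintro - ⟨v, rfl⟩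
    -- decompose each `v s`
    set k : Fin 3 → ℚ ⊗[ℤ] L := fun s => v s - ∑ j : Fin 4, ψ j (v s) • u j with hk
    have hpsik : ∀ (i : Fin 4) (s : Fin 3), ψ i (k s) = 0 := by
      intro i s
      simp only [hk, map_sub, map_sum, map_smul, smul_eq_mul]
      rw [Finset.sum_eq_single i]
      · rw [hu i i, if_pos rfl, mul_one, sub_self]
      · intro j _ hji
        rw [hu j i, if_neg (Ne.symm hji), mul_zero]
      · intro h
        exact absurd (Finset.mem_univ i) h
    set y : Fin 3 → Fin 5 → ℚ ⊗[ℤ] L :=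
      fun s => Fin.cons (k s) (fun j : Fin 4 => ψ j (v s) • u j) with hy
    have hv : ∀ s : Fin 3, v s = ∑ t : Fin 5, y s t := by
      intro s
      rw [Fin.sum_univ_succ]
      simp only [hy, Fin.cons_zero, Fin.cons_succ, hk]
      abel
    have hexp : ExteriorAlgebra.ιMulti ℚ 3 (fun s => ∑ t : Fin 5, y s t) =
        ∑ g : Fin 3 → Fin 5, ExteriorAlgebra.ιMulti ℚ 3 (fun s => y s (g s)) :=
      (ExteriorAlgebra.ιMulti ℚ 3).toMultilinearMap.map_sum y
    rw [show v = (fun s => ∑ t : Fin 5, y s t) from funext hv, hexp]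
    apply Submodule.sum_mem
    intro g _
    -- choose an index `i` avoided by `g`
    have hexists : ∃ i : Fin 4, ∀ s : Fin 3, g s ≠ Fin.succ i := by
      by_contra hcon
      push_neg at hcon
      choose h hh using hcon
      obtain ⟨a, b, hab, he⟩ := Fintype.exists_ne_map_eq_of_card_lt h (by simp)
      exact hab (Fin.succ_injective 4 (by rw [← hh a, ← hh b, he]))
    obtain ⟨i, hi⟩ := hexists
    have hmem : ∀ s : Fin 3, y s (g s) ∈ (LinearMap.ker (B (w i))).baseChange ℚ := by
      intro s
      apply hker
      rcases Fin.eq_zero_or_eq_succ (g s) with h0 | ⟨j, hj⟩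
      · rw [h0]
        simpa only [hy, Fin.cons_zero] using hpsik i s
      · rw [hj]
        have hji : j ≠ i := by
          intro hji
          exact hi s (by rw [hj, hji])
        simp only [hy, Fin.cons_succ, map_smul, smul_eq_mul, hu j i,
          if_neg (Ne.symm hji), mul_zero]
    refine Submodule.mem_iSup_of_mem i ?_
    refine Submodule.mem_map.mpr ⟨ExteriorAlgebra.ιMulti ℚ 3 (fun s => ⟨y s (g s), hmem s⟩), ?_, ?_⟩
    · exact ExteriorAlgebra.ιMulti_range ℚ 3 ⟨_, rfl⟩
    · rw [AlgHom.toLinearMap_apply, ExteriorAlgebra.map_apply_ιMulti]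
      rfl
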